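/- Small-set expansion on the multislice (sharpness): for every parameter κ = (κ_1,…,κ_L) with L ≥ 2 there exists a nonempty subset A ⊆ Ω_κ with |A| < |Ω_κ| such that |∂A|·log(n/κ_min) ≤ n·|A|·log(|Ω_κ|/|A|). -/

import Mathlib

open Finset

namespace Multislice

/-- The multislice `Ω_κ`: sequences of length `n` with values in `Fin L`
in which color `ℓ` appears exactly `κ ℓ` times. -/
def slice (L n : ℕ) (κ : Fin L → ℕ) : Finset (Fin n → Fin L) :=
  Finset.univ.filter fun ω => ∀ ℓ, (Finset.univ.filter fun i => ω i = ℓ).card = κ ℓ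

/-- Average of `f` with respect to the uniform distribution on `Ω`. -/
noncomputable def expect {L n : ℕ} (Ω : Finset (Fin n → Fin L))
    (f : (Fin n → Fin L) → ℝ) : ℝ :=
  (∑ ω ∈ Ω, f ω) / Ω.card

/-- Discrete gradient `(∇^{ij} f)(ω) = f(ω^{ij}) - f(ω)`. -/
noncomputable def grad {L n : ℕ} (i j : Fin n) (f : (Fin n → Fin L) → ℝ)
    (ω : Fin n → Fin L) : ℝ :=
  f (ω ∘ Equiv.swap i j) - f ω

/-- The Dirichlet form `𝔈_κ(f,g) = (1/(2n)) Σ_{i<j} E[(∇^{ij}f)(∇^{ij}g)]`. -/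
noncomputable def dirichlet {L n : ℕ} (Ω : Finset (Fin n → Fin L))
    (f g : (Fin n → Fin L) → ℝ) : ℝ :=
  (1 / (2 * (n : ℝ))) *
    ∑ p ∈ Finset.univ.filter (fun p : Fin n × Fin n => p.1 < p.2),
      expect Ω fun ω => grad p.1 p.2 f ω * grad p.1 p.2 g ω

/-- The weighted Dirichlet form `𝔈^G_κ(f,g) = (1/2) Σ_{i<j} G_{ij} E[(∇^{ij}f)(∇^{ij}g)]`. -/
noncomputable def wDirichlet {L n : ℕ} (G : Fin n → Fin n → ℝ)
    (Ω : Finset (Fin n → Fin L)) (f g : (Fin n → Fin L) → ℝ) : ℝ :=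
  (1 / 2) *
    ∑ p ∈ Finset.univ.filter (fun p : Fin n × Fin n => p.1 < p.2),
      G p.1 p.2 * expect Ω fun ω => grad p.1 p.2 f ω * grad p.1 p.2 g ω

/-- Entropy `Ent(f) = E[f log f] - E[f] log E[f]` (note `Real.log 0 = 0`). -/
noncomputable def entropy {L n : ℕ} (Ω : Finset (Fin n → Fin L))
    (f : (Fin n → Fin L) → ℝ) : ℝ :=
  expect Ω (fun ω => f ω * Real.log (f ω)) - expect Ω f * Real.log (expect Ω f)

/-- Variance `Var(f) = E[f²] - (E[f])²`. -/
noncomputable def variance {L n : ℕ} (Ω : Finset (Fin n → Fin L))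
    (f : (Fin n → Fin L) → ℝ) : ℝ :=
  expect Ω (fun ω => f ω ^ 2) - (expect Ω f) ^ 2

/-- The edge boundary `∂A` of `A ⊆ Ω`: edges (recorded as pairs with first endpoint
in `A` and second endpoint in `Ω \ A`) between `A` and its complement, where two
states are adjacent when they differ in exactly two coordinates. -/
def edgeBoundary {L n : ℕ} (Ω A : Finset (Fin n → Fin L)) :
    Finset ((Fin n → Fin L) × (Fin n → Fin L)) :=
  (A ×ˢ (Ω \ A)).filter fun p => (Finset.univ.filter fun i => p.1 i ≠ p.2 i).card = 2

/-- The `ℓ`-colored region `ξ_ℓ(ω) = {i : ω i = ℓ}`. -/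
def xi {L n : ℕ} (ℓ : Fin L) (ω : Fin n → Fin L) : Finset (Fin n) :=
  Finset.univ.filter fun i => ω i = ℓ

/-- The parameter `κ^{∖ℓ}` obtained from `κ` by removing the `ℓ`-th entry. -/
def removeIdx {L : ℕ} (κ : Fin L → ℕ) (ℓ : Fin L) (m : Fin (L - 1)) : ℕ :=
  if (m : ℕ) < (ℓ : ℕ) then κ ⟨m, by have := m.isLt; omega⟩
  else κ ⟨(m : ℕ) + 1, by have := m.isLt; omega⟩

lemma mem_slice {L n : ℕ} {κ : Fin L → ℕ} {ω : Fin n → Fin L} :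
    ω ∈ slice L n κ ↔ ∀ ℓ, (univ.filter fun i => ω i = ℓ).card = κ ℓ := by
  simp [slice]

lemma slice_comp {L n : ℕ} {κ : Fin L → ℕ} {ω : Fin n → Fin L}
    (h : ω ∈ slice L n κ) (σ : Equiv.Perm (Fin n)) : ω ∘ ⇑σ ∈ slice L n κ := by
  rw [mem_slice] at h ⊢
  intro ℓ
  rw [← h ℓ]
  apply Finset.card_bij (fun i _ => σ i)
  · intro a ha; simp at ha ⊢; exact ha
  · intro a _ b _ hab; exact σ.injective hab
  · intro b hb; refine ⟨σ.symm b, ?_, by simp⟩; simp at hb ⊢; simpa using hb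

-- pinning lemma
lemma pair_pin {L n : ℕ} {κ : Fin L → ℕ} {ω ω' : Fin n → Fin L}
    (hω : ω ∈ slice L n κ) (hω' : ω' ∈ slice L n κ) {a b : Fin n} (hab : a ≠ b)
    (hagree : ∀ i, i ≠ a → i ≠ b → ω i = ω' i) :
    (ω' a = ω a ∧ ω' b = ω b) ∨ (ω' a = ω b ∧ ω' b = ω a) := by
  classical
  rw [mem_slice] at hω hω'
  have key : ∀ c : Fin L,
      ((if ω a = c then 1 else 0) + (if ω b = c then 1 else 0) : ℕ)
      = (if ω' a = c then 1 else 0) + (if ω' b = c then 1 else 0) := by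
    intro c
    have h1 : (univ.filter fun i => ω i = c).card = (univ.filter fun i => ω' i = c).card := by
      rw [hω c, hω' c]
    rw [Finset.card_filter, Finset.card_filter] at h1
    have hsplit : (univ : Finset (Fin n)) = insert a (insert b (univ \ {a, b})) := by
      ext i; simp; tauto
    rw [hsplit, Finset.sum_insert, Finset.sum_insert, Finset.sum_insert, Finset.sum_insert] at h1
    · have hrest : ∑ i ∈ univ \ {a,b}, (if ω i = c then 1 else 0)
          = ∑ i ∈ univ \ {a,b}, (if ω' i = c then 1 else 0) := by
        apply Finset.sum_congr rfl
        intro i hi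
        simp at hi
        rw [hagree i hi.1 hi.2]
      omega
    · simp
    · simp [hab]
    · simp
    · simp [hab]
  by_cases h : ω' a = ω a
  · left
    refine ⟨h, ?_⟩
    have k := key (ω b)
    rw [h, if_pos rfl] at k
    by_contra hc
    rw [if_neg hc] at k
    split_ifs at k <;> omega
  · right
    have k1 := key (ω a)
    rw [if_pos rfl, if_neg h] at k1
    have hba : ω b ≠ ω a := by
      intro e
      rw [if_pos e] at k1
      split_ifs at k1 <;> omega
    have hb'a : ω' b = ω a := by
      by_contra e
      rw [if_neg hba, if_neg e] at k1
      omega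
    refine ⟨?_, hb'a⟩
    have k2 := key (ω b)
    have hne : ω' b ≠ ω b := by rw [hb'a]; exact fun e => hba e.symm
    rw [if_pos rfl, if_neg (fun e : ω a = ω b => hba e.symm), if_neg hne] at k2
    by_contra e
    rw [if_neg e] at k2
    omega

lemma card_filter_pos_eq {L n : ℕ} (κ : Fin L → ℕ) (ℓ0 : Fin L) (z i : Fin n) :
    ((slice L n κ).filter fun ω => ω i = ℓ0).card
      = ((slice L n κ).filter fun ω => ω z = ℓ0).card := by
  classical
  apply Finset.card_nbij' (fun ω => ω ∘ ⇑(Equiv.swap z i)) (fun ω => ω ∘ ⇑(Equiv.swap z i))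
  · intro ω hω
    simp only [Finset.mem_coe, Finset.mem_filter] at hω ⊢
    exact ⟨slice_comp hω.1 _, by simpa [Equiv.swap_apply_left] using hω.2⟩
  · intro ω hω
    simp only [Finset.mem_coe, Finset.mem_filter] at hω ⊢
    exact ⟨slice_comp hω.1 _, by simpa [Equiv.swap_apply_left] using hω.2⟩
  · intro ω _
    funext x
    simp [Function.comp, Equiv.swap_apply_self]
  · intro ω _
    funext x
    simp [Function.comp, Equiv.swap_apply_self]

lemma double_count {L n : ℕ} (κ : Fin L → ℕ) (ℓ0 : Fin L) (z : Fin n) :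
    n * ((slice L n κ).filter fun ω => ω z = ℓ0).card = κ ℓ0 * (slice L n κ).card := by
  classical
  have h1 : ∑ i : Fin n, ((slice L n κ).filter fun ω => ω i = ℓ0).card
      = n * ((slice L n κ).filter fun ω => ω z = ℓ0).card := by
    rw [Finset.sum_congr rfl fun i _ => card_filter_pos_eq κ ℓ0 z i]
    simp [mul_comm]
  rw [← h1]
  have h2 : ∀ i : Fin n, ((slice L n κ).filter fun ω => ω i = ℓ0).card
      = ∑ ω ∈ slice L n κ, if ω i = ℓ0 then 1 else 0 := fun i => Finset.card_filter _ _
  rw [Finset.sum_congr rfl fun i _ => h2 i, Finset.sum_comm]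
  have h3 : ∀ ω ∈ slice L n κ, (∑ i : Fin n, if ω i = ℓ0 then 1 else 0) = κ ℓ0 := by
    intro ω hω
    rw [← Finset.card_filter]
    exact mem_slice.mp hω ℓ0
  rw [Finset.sum_congr rfl h3]
  simp [mul_comm]


noncomputable def otherIdx {L n : ℕ} (z : Fin n) (p : (Fin n → Fin L) × (Fin n → Fin L)) : Fin n :=
  if h : ((Finset.univ.filter fun i => p.1 i ≠ p.2 i).erase z).Nonempty
  then ((Finset.univ.filter fun i => p.1 i ≠ p.2 i).erase z).min' h else z

lemma boundary_structure {L n : ℕ} (κ : Fin L → ℕ) (ℓ0 : Fin L) (z : Fin n)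
    (p : (Fin n → Fin L) × (Fin n → Fin L))
    (hp : p ∈ edgeBoundary (slice L n κ) ((slice L n κ).filter fun ω => ω z = ℓ0)) :
    ∃ j : Fin n, j ≠ z ∧ otherIdx z p = j ∧
      p.2 = fun i => if i = z then p.1 j else if i = j then p.1 z else p.1 i := by
  classical
  simp only [edgeBoundary, Finset.mem_filter, Finset.mem_product, Finset.mem_sdiff] at hp
  obtain ⟨⟨hp1, hp2⟩, hD⟩ := hp
  obtain ⟨hp1s, hp1z⟩ := hp1
  have hp2s : p.2 ∈ slice L n κ := hp2.1
  have hp2z : p.2 z ≠ ℓ0 := fun h => hp2.2 ⟨hp2s, h⟩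
  set D := (Finset.univ.filter fun i => p.1 i ≠ p.2 i) with hDdef
  have hz : z ∈ D := by
    simp only [hDdef, Finset.mem_filter, Finset.mem_univ, true_and]
    rw [hp1z]
    exact fun h => hp2z h.symm
  have herase : (D.erase z).card = 1 := by
    rw [Finset.card_erase_of_mem hz, hD]
  have hne : (D.erase z).Nonempty := Finset.card_pos.mp (by omega)
  set j := otherIdx z p with hj
  have hjmem : j ∈ D.erase z := by
    rw [hj, otherIdx, dif_pos hne]
    exact Finset.min'_mem _ _
  have hjz : j ≠ z := (Finset.mem_erase.mp hjmem).1
  obtain ⟨x, hx⟩ := Finset.card_eq_one.mp herase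
  have hjx : j = x := by rw [hx] at hjmem; simpa using hjmem
  have hDeq : D = {z, j} := by
    rw [← Finset.insert_erase hz, hx, hjx]
  have hagree : ∀ i, i ≠ z → i ≠ j → p.1 i = p.2 i := by
    intro i hiz hij
    by_contra hc
    have : i ∈ D := by simp [hDdef, hc]
    rw [hDeq] at this
    simp [hiz, hij] at this
  have hpin := pair_pin hp1s hp2s hjz.symm hagree
  rcases hpin with ⟨h1, _⟩ | ⟨h1, h2⟩
  · exact absurd (h1.trans hp1z) hp2z
  · refine ⟨j, hjz, rfl, ?_⟩
    funext i
    by_cases hiz : i = z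
    · subst hiz; simp [h1]
    · by_cases hij : i = j
      · subst hij; simp [h2, hjz]
      · simp [hiz, hij, (hagree i hiz hij).symm]

lemma boundary_card_le {L n : ℕ} (κ : Fin L → ℕ) (ℓ0 : Fin L) (z : Fin n) :
    (edgeBoundary (slice L n κ) ((slice L n κ).filter fun ω => ω z = ℓ0)).card
      ≤ ((slice L n κ).filter fun ω => ω z = ℓ0).card * n := by
  classical
  set A := (slice L n κ).filter fun ω => ω z = ℓ0 with hA
  have := Finset.card_le_card_of_injOn (s := edgeBoundary (slice L n κ) A)
    (f := fun p => (p.1, otherIdx z p))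
    (t := A ×ˢ (Finset.univ : Finset (Fin n))) ?_ ?_
  · simpa using this
  · intro p hp
    simp only [edgeBoundary, Finset.mem_coe, Finset.mem_filter, Finset.mem_product] at hp
    simp [hp.1.1]
  · intro p hp q hq hfpq
    obtain ⟨jp, _, hjp, hp2⟩ := boundary_structure κ ℓ0 z p hp
    obtain ⟨jq, _, hjq, hq2⟩ := boundary_structure κ ℓ0 z q hq
    simp only [Prod.mk.injEq] at hfpq
    obtain ⟨h1, h2⟩ := hfpq
    rw [hjp, hjq] at h2
    have : p.2 = q.2 := by rw [hp2, hq2, h1, h2]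
    exact Prod.ext h1 this

lemma slice_nonempty {L : ℕ} (κ : Fin L → ℕ) (n : ℕ) (hn : n = ∑ ℓ, κ ℓ) :
    (slice L n κ).Nonempty := by
  classical
  set l : List (Fin L) := (List.finRange L).flatMap (fun ℓ => List.replicate (κ ℓ) ℓ) with hl
  have hlen : l.length = n := by
    simp [hl, List.length_flatMap, hn, Fin.sum_univ_def, Function.comp_def]
  refine ⟨fun i => l.get (Fin.cast hlen.symm i), mem_slice.mpr ?_⟩
  intro c
  have cfc : ∀ (f : Fin n → Fin L), (univ.filter fun i => f i = c).card
      = (Multiset.map f univ.val).count c := by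
    intro f
    rw [Multiset.count_map]
    simp [Finset.card_filter, eq_comm, Finset.filter]
  rw [cfc]
  have hmap : Multiset.map (fun i : Fin n => l.get (Fin.cast hlen.symm i)) univ.val
      = (l : Multiset (Fin L)) := by
    have h1 : (univ : Finset (Fin n)).val
        = Multiset.map (finCongr hlen) (univ : Finset (Fin l.length)).val := by
      have := Finset.map_univ_equiv (finCongr hlen)
      rw [← this]; rfl
    rw [h1, Multiset.map_map]
    have h2 : ((fun i : Fin n => l.get (Fin.cast hlen.symm i)) ∘ finCongr hlen)
        = fun j : Fin l.length => l.get j := by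
      funext j; simp [finCongr]
    rw [h2]
    have h3 : (univ : Finset (Fin l.length)).val
        = ((List.finRange l.length : List (Fin l.length)) : Multiset _) := rfl
    rw [h3]
    rw [show Multiset.map (fun j : Fin l.length => l.get j) (List.finRange l.length : Multiset _)
      = ((List.finRange l.length).map (fun j => l.get j) : List (Fin L)) from rfl]
    rw [← List.ofFn_eq_map, List.ofFn_get]
  rw [hmap]
  have h4 : (l : Multiset (Fin L)).count c = l.count c := by simp
  rw [h4, hl, List.count_flatMap]
  simp only [Function.comp_def, List.count_replicate]
  rw [← Fin.sum_univ_def]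
  simp only [beq_iff_eq]
  rw [Finset.sum_ite_eq' univ c κ]
  simp

/-- small-set expansion on the multislice is sharp: there is a
nonempty proper subset witnessing the matching upper bound. -/
theorem multislice_small_set_expansion_sharp
    (L : ℕ) (hL : 2 ≤ L) (κ : Fin L → ℕ) (hκ : ∀ ℓ, 0 < κ ℓ)
    (n : ℕ) (hn : n = ∑ ℓ, κ ℓ)
    (κmin : ℕ) (hmin : ∀ ℓ, κmin ≤ κ ℓ) (hmem : ∃ ℓ, κ ℓ = κmin) :
    ∃ A : Finset (Fin n → Fin L), A ⊆ slice L n κ ∧ A.Nonempty ∧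
      A.card < (slice L n κ).card ∧
      ((edgeBoundary (slice L n κ) A).card : ℝ) * Real.log ((n : ℝ) / (κmin : ℝ)) ≤
        (n : ℝ) * (A.card : ℝ) * Real.log (((slice L n κ).card : ℝ) / (A.card : ℝ)) := by
  classical
  obtain ⟨ℓ0, hℓ0⟩ := hmem
  have hκ0 : 0 < κmin := hℓ0 ▸ hκ ℓ0
  have hκn : κmin ≤ n := by
    rw [hn, ← hℓ0]
    exact Finset.single_le_sum (fun _ _ => Nat.zero_le _) (mem_univ ℓ0)
  have hn0 : 0 < n := lt_of_lt_of_le hκ0 hκn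
  set z : Fin n := ⟨0, hn0⟩ with hz
  set A := (slice L n κ).filter fun ω => ω z = ℓ0 with hA
  obtain ⟨ω0, hω0⟩ := slice_nonempty κ n hn
  have swap_mem : ∀ (ℓ : Fin L) (i : Fin n), ω0 i = ℓ →
      (ω0 ∘ ⇑(Equiv.swap z i)) ∈ slice L n κ ∧ (ω0 ∘ ⇑(Equiv.swap z i)) z = ℓ := by
    intro ℓ i hi
    exact ⟨slice_comp hω0 _, by simp [Equiv.swap_apply_left, hi]⟩
  have exist_fiber : ∀ ℓ : Fin L, ∃ i, ω0 i = ℓ := by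
    intro ℓ
    have : (univ.filter fun i => ω0 i = ℓ).Nonempty := by
      apply Finset.card_pos.mp
      rw [mem_slice.mp hω0 ℓ]
      exact hκ ℓ
    obtain ⟨i, hi⟩ := this
    exact ⟨i, (Finset.mem_filter.mp hi).2⟩
  have hAne : A.Nonempty := by
    obtain ⟨i, hi⟩ := exist_fiber ℓ0
    obtain ⟨hs, hv⟩ := swap_mem ℓ0 i hi
    exact ⟨_, Finset.mem_filter.mpr ⟨hs, hv⟩⟩
  have hlt : A.card < (slice L n κ).card := by
    apply Finset.card_lt_card
    rw [Finset.ssubset_iff_of_subset (Finset.filter_subset _ _)]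
    obtain ⟨ℓ1, hℓ1⟩ : ∃ ℓ1 : Fin L, ℓ1 ≠ ℓ0 := by
      have : 1 < Fintype.card (Fin L) := by rw [Fintype.card_fin]; omega
      exact Fintype.exists_ne_of_one_lt_card this ℓ0
    obtain ⟨i, hi⟩ := exist_fiber ℓ1
    obtain ⟨hs, hv⟩ := swap_mem ℓ1 i hi
    refine ⟨_, hs, ?_⟩
    rw [Finset.mem_filter]
    push_neg
    intro _
    rw [hv]
    exact hℓ1
  have hcount : n * A.card = κmin * (slice L n κ).card := by
    rw [hA, ← hℓ0]
    exact double_count κ ℓ0 z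
  have hB : (edgeBoundary (slice L n κ) A).card ≤ A.card * n := boundary_card_le κ ℓ0 z
  refine ⟨A, Finset.filter_subset _ _, hAne, hlt, ?_⟩
  have ha : 0 < A.card := Finset.card_pos.mpr hAne
  have hlogeq : Real.log (((slice L n κ).card : ℝ) / (A.card : ℝ))
      = Real.log ((n : ℝ) / (κmin : ℝ)) := by
    congr 1
    rw [div_eq_div_iff (Nat.cast_ne_zero.mpr ha.ne') (Nat.cast_ne_zero.mpr hκ0.ne')]
    exact_mod_cast (mul_comm (slice L n κ).card κmin).trans hcount.symm
  rw [hlogeq]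
  have hlognn : 0 ≤ Real.log ((n : ℝ) / (κmin : ℝ)) := by
    apply Real.log_nonneg
    rw [le_div_iff₀ (by exact_mod_cast hκ0)]
    simpa using (by exact_mod_cast hκn : (κmin : ℝ) ≤ (n : ℝ))
  apply mul_le_mul_of_nonneg_right _ hlognn
  rw [mul_comm] at hB
  exact_mod_cast hB


end Multislice
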